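/- Let d ≥ 2, r ≥ 0, k ≥ 0, m̄ ≥ 1, μ ≥ 0 be integers and suppose that (k+1)(n-k) + 1 > C(d+k, k) · d^r, where n is an integer with n > k. Then for all sufficiently large integers m (with m > m̄), the following inequality holds: [(k+1)(n-k)+1]·[C(m+r+1, r+1) - C(m-m̄+r+1, r+1)] + C(d+k, k)·C(dm - m̄ + μ + r + 1, r+1) > C(d+k, k)·C(dm + μ + r + 1, r+1). -/

import Mathlib

open Finset

lemma asc_prod (n r : ℕ) : (n + 1).ascFactorial r = ∏ i ∈ range r, (n + 1 + i) := by
  induction r with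
  | zero => simp
  | succ r ih => rw [Nat.ascFactorial_succ, prod_range_succ, ih, mul_comm]

lemma choose_mul_factorial (n r : ℕ) :
    (n + r).choose r * Nat.factorial r = ∏ i ∈ range r, (n + 1 + i) := by
  rw [← asc_prod, Nat.ascFactorial_eq_factorial_mul_choose, mul_comm]

lemma L1 (r g x : ℕ) :
    (x + r + 1).choose (r + 1) + g * (x + r + 1).choose r ≤ (x + g + r + 1).choose (r + 1) := by
  induction g with
  | zero => simp
  | succ g ih =>
    have h1 : x + (g + 1) + r + 1 = (x + g + r + 1) + 1 := by ring
    have hp : ((x + g + r + 1) + 1).choose (r + 1)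
        = (x + g + r + 1).choose r + (x + g + r + 1).choose (r + 1) :=
      Nat.choose_succ_succ _ _
    have h2 : (x + r + 1).choose r ≤ (x + g + r + 1).choose r :=
      Nat.choose_le_choose _ (by omega)
    rw [h1, hp]
    have hg : (g + 1) * (x + r + 1).choose r = g * (x + r + 1).choose r + (x + r + 1).choose r := by
      ring
    omega

lemma L2 (r g x : ℕ) :
    (x + g + r + 1).choose (r + 1) ≤ (x + r + 1).choose (r + 1) + g * (x + g + r).choose r := by
  induction g with
  | zero => simp
  | succ g ih =>
    have h1 : x + (g + 1) + r + 1 = (x + g + r + 1) + 1 := by ring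
    have hp : ((x + g + r + 1) + 1).choose (r + 1)
        = (x + g + r + 1).choose r + (x + g + r + 1).choose (r + 1) :=
      Nat.choose_succ_succ _ _
    have h2 : (x + g + r + 1).choose r ≤ (x + (g + 1) + r).choose r :=
      Nat.choose_le_choose _ (by omega)
    have h3 : (x + g + r).choose r ≤ (x + (g + 1) + r).choose r :=
      Nat.choose_le_choose _ (by omega)
    rw [h1, hp]
    have hg : (g + 1) * (x + (g+1) + r).choose r
        = g * (x + (g+1) + r).choose r + (x + (g+1) + r).choose r := by ring
    have h4 : g * (x + g + r).choose r ≤ g * (x + (g+1) + r).choose r :=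
      Nat.mul_le_mul_left _ h3
    omega

lemma Lprod (a : ℕ → ℕ) (c M r : ℕ) (h : ∀ i < r, a i + c ≤ M) :
    ∏ i ∈ range r, (a i + c) ≤ (∏ i ∈ range r, a i) + r * c * M ^ (r - 1) := by
  induction r with
  | zero => simp
  | succ r ih =>
    have ih' := ih (fun i hi => h i (by omega))
    rw [prod_range_succ, prod_range_succ]
    have har : a r + c ≤ M := h r (by omega)
    have hprodM : ∏ i ∈ range r, a i ≤ M ^ r := by
      calc ∏ i ∈ range r, a i ≤ ∏ i ∈ range r, M :=
            Finset.prod_le_prod (fun _ _ => Nat.zero_le _)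
              (fun i hi => by have := h i (by simpa using Nat.lt_succ_of_lt (mem_range.mp hi)); omega)
        _ = M ^ r := by simp
    have hMr : r * c * M ^ (r - 1) * M ≤ r * c * M ^ r := by
      rcases Nat.eq_zero_or_pos r with hr | hr
      · subst hr; simp
      · have hpow : M ^ (r - 1) * M = M ^ r := by
          rw [← pow_succ]; congr 1; omega
        rw [mul_assoc, hpow]
    calc (∏ i ∈ range r, (a i + c)) * (a r + c)
        ≤ ((∏ i ∈ range r, a i) + r * c * M ^ (r - 1)) * (a r + c) :=
          Nat.mul_le_mul_right _ ih'
      _ = (∏ i ∈ range r, a i) * a r + (∏ i ∈ range r, a i) * c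
            + r * c * M ^ (r - 1) * (a r + c) := by ring
      _ ≤ (∏ i ∈ range r, a i) * a r + M ^ r * c + r * c * M ^ (r - 1) * M := by
          gcongr
      _ ≤ (∏ i ∈ range r, a i) * a r + (r + 1) * c * M ^ ((r + 1) - 1) := by
          simp only [Nat.add_sub_cancel]
          nlinarith [hMr]

lemma core (A B d c r : ℕ) (hA : B * d ^ r + 1 ≤ A) (hd : 1 ≤ d) (s : ℕ)
    (hs : B * r * c * (d + d * r + c) ^ (r - 1) + 1 ≤ s) :
    B * (d * s + c + r).choose r < A * (s + r).choose r := by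
  set P := ∏ i ∈ range r, (s + 1 + i) with hPdef
  set Q := ∏ i ∈ range r, (d * s + c + 1 + i) with hQdef
  set Mx := d * (s + r) + c with hMxdef
  have hQ1 : Q ≤ ∏ i ∈ range r, (d * (s + 1 + i) + c) := by
    apply Finset.prod_le_prod (fun _ _ => Nat.zero_le _)
    intro i _
    nlinarith [Nat.one_le_iff_ne_zero.mp hd]
  have hdP : ∏ i ∈ range r, (d * (s + 1 + i)) = d ^ r * P := by
    calc ∏ i ∈ range r, (d * (s + 1 + i))
        = (∏ _i ∈ range r, d) * ∏ i ∈ range r, (s + 1 + i) := Finset.prod_mul_distrib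
      _ = d ^ r * P := by rw [hPdef]; simp
  have hQ2 : ∏ i ∈ range r, (d * (s + 1 + i) + c) ≤ d ^ r * P + r * c * Mx ^ (r - 1) := by
    have := Lprod (fun i => d * (s + 1 + i)) c Mx r (fun i hi => by
      show d * (s + 1 + i) + c ≤ Mx
      have : d * (s + 1 + i) ≤ d * (s + r) := Nat.mul_le_mul_left _ (by omega)
      omega)
    rw [hdP] at this
    exact this
  have hP1 : (s + 1) ^ r ≤ P := by
    rw [hPdef]
    calc (s + 1) ^ r = ∏ _i ∈ range r, (s + 1) := by simp
      _ ≤ ∏ i ∈ range r, (s + 1 + i) :=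
          Finset.prod_le_prod (fun _ _ => Nat.zero_le _) (fun i _ => by omega)
  have hsmall : B * (r * c * Mx ^ (r - 1)) < P := by
    rcases Nat.eq_zero_or_pos r with hr | hr
    · subst hr; simp only [Nat.zero_mul, Nat.mul_zero]
      have : 1 ≤ P := by rw [hPdef]; simp
      omega
    · have hMx : Mx ≤ (d + d * r + c) * (s + 1) := by
        have hexp : (d + d * r + c) * (s + 1) = d * s + d * r + c + (d + d * r * s + c * s) := by
          ring
        have hexp2 : d * (s + r) = d * s + d * r := by ring
        omega
      have hMxp : Mx ^ (r - 1) ≤ (d + d * r + c) ^ (r - 1) * (s + 1) ^ (r - 1) := by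
        calc Mx ^ (r - 1) ≤ ((d + d * r + c) * (s + 1)) ^ (r - 1) :=
              Nat.pow_le_pow_left hMx _
          _ = (d + d * r + c) ^ (r - 1) * (s + 1) ^ (r - 1) := mul_pow _ _ _
      have h1 : B * (r * c * Mx ^ (r - 1))
          ≤ (B * r * c * (d + d * r + c) ^ (r - 1)) * (s + 1) ^ (r - 1) := by
        calc B * (r * c * Mx ^ (r - 1)) = B * r * c * Mx ^ (r - 1) := by ring
          _ ≤ B * r * c * ((d + d * r + c) ^ (r - 1) * (s + 1) ^ (r - 1)) :=
              Nat.mul_le_mul_left _ hMxp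
          _ = (B * r * c * (d + d * r + c) ^ (r - 1)) * (s + 1) ^ (r - 1) := by ring
      have h2 : (B * r * c * (d + d * r + c) ^ (r - 1)) * (s + 1) ^ (r - 1)
          < (s + 1) * (s + 1) ^ (r - 1) :=
        Nat.mul_lt_mul_of_lt_of_le (by omega) (le_refl _) (Nat.pow_pos (by omega))
      have h3 : (s + 1) * (s + 1) ^ (r - 1) = (s + 1) ^ r := by
        rw [← pow_succ']; congr 1; omega
      omega
  have hcf1 : (s + r).choose r * Nat.factorial r = P := choose_mul_factorial s r
  have hcf2 : (d * s + c + r).choose r * Nat.factorial r = Q := choose_mul_factorial (d * s + c) r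
  have key : B * Q < A * P := by
    calc B * Q ≤ B * (d ^ r * P + r * c * Mx ^ (r - 1)) :=
          Nat.mul_le_mul_left _ (le_trans hQ1 hQ2)
      _ = B * d ^ r * P + B * (r * c * Mx ^ (r - 1)) := by ring
      _ < B * d ^ r * P + P := by omega
      _ = (B * d ^ r + 1) * P := by ring
      _ ≤ A * P := Nat.mul_le_mul_right _ hA
  have : B * (d * s + c + r).choose r * Nat.factorial r
      < A * (s + r).choose r * Nat.factorial r := by
    rw [mul_assoc, mul_assoc, hcf1, hcf2]; exact key
  exact Nat.lt_of_mul_lt_mul_right this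

/-- The asymptotic numerical estimate in the proof of the Section Lemma: under
`(k+1)(n−k) + 1 > C(d+k,k)·d^r`, for all sufficiently large `m` (with `m > mbar`) one has
`[(k+1)(n−k)+1]·[C(m+r+1,r+1) − C(m−mbar+r+1,r+1)] + C(d+k,k)·C(dm−mbar+μ+r+1,r+1)
  > C(d+k,k)·C(dm+μ+r+1,r+1)`. -/
theorem stmt_7 (d r k mbar μ n : ℕ) (hd : 2 ≤ d) (hmbar : 1 ≤ mbar) (hn : k < n)
    (h : (d + k).choose k * d ^ r < (k + 1) * (n - k) + 1) :
    ∃ M : ℕ, ∀ m : ℕ, M ≤ m → mbar < m →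
      ((k + 1) * (n - k) + 1) *
          ((m + r + 1).choose (r + 1) - (m - mbar + r + 1).choose (r + 1)) +
        (d + k).choose k * (d * m - mbar + μ + r + 1).choose (r + 1) >
      (d + k).choose k * (d * m + μ + r + 1).choose (r + 1) := by
  obtain ⟨mb, rfl⟩ : ∃ mb, mbar = mb + 1 := ⟨mbar - 1, by omega⟩
  set A := (k + 1) * (n - k) + 1 with hAdef
  set B := (d + k).choose k with hBdef
  set c := d * mb + μ with hcdef
  refine ⟨B * r * c * (d + d * r + c) ^ (r - 1) + mb + 2, fun m hM hm => ?_⟩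
  set x := m - (mb + 1) with hxdef
  have hxm : m = x + (mb + 1) := by omega
  have hs : B * r * c * (d + d * r + c) ^ (r - 1) + 1 ≤ x + 1 := by omega
  have hdm : d * m + μ = d * (x + 1) + c := by
    rw [hxm, hcdef]; ring
  have hdm2 : (mb + 1) ≤ d * m := by
    have h2m : 2 * m ≤ d * m := Nat.mul_le_mul_right m hd
    omega
  set y := d * m - (mb + 1) + μ with hydef
  have hy : y + (mb + 1) = d * m + μ := by omega
  -- Step 1: lower bound on the difference
  have h1 : (x + r + 1).choose (r + 1) + (mb + 1) * (x + r + 1).choose r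
      ≤ (m + r + 1).choose (r + 1) := by
    have := L1 r (mb + 1) x
    rwa [show x + (mb + 1) + r + 1 = m + r + 1 by omega] at this
  -- Step 2: upper bound on the big binomial
  have h2 : (d * m + μ + r + 1).choose (r + 1)
      ≤ (y + r + 1).choose (r + 1) + (mb + 1) * (d * m + μ + r).choose r := by
    have := L2 r (mb + 1) y
    rwa [show y + (mb + 1) + r + 1 = d * m + μ + r + 1 by omega,
      show y + (mb + 1) + r = d * m + μ + r by omega] at this
  -- Step 3: core asymptotic estimate
  have h3 : B * (d * m + μ + r).choose r < A * (x + r + 1).choose r := by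
    have := core A B d c r (by omega) (by omega) (x + 1) hs
    rwa [show d * (x + 1) + c + r = d * m + μ + r by omega,
      show x + 1 + r = x + r + 1 by omega] at this
  have g1 : (mb + 1) * (B * (d * m + μ + r).choose r)
      < (mb + 1) * (A * (x + r + 1).choose r) :=
    mul_lt_mul_of_pos_left h3 (by omega)
  have g2 : (mb + 1) * (A * (x + r + 1).choose r)
      = A * ((mb + 1) * (x + r + 1).choose r) := by ring
  have g3 : A * ((mb + 1) * (x + r + 1).choose r)
      ≤ A * ((m + r + 1).choose (r + 1) - (x + r + 1).choose (r + 1)) :=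
    Nat.mul_le_mul_left _ (by omega)
  have g4 : B * (d * m + μ + r + 1).choose (r + 1)
      ≤ B * (y + r + 1).choose (r + 1) + (mb + 1) * (B * (d * m + μ + r).choose r) := by
    have hb := Nat.mul_le_mul_left B h2
    have : B * ((y + r + 1).choose (r + 1) + (mb + 1) * (d * m + μ + r).choose r)
        = B * (y + r + 1).choose (r + 1) + (mb + 1) * (B * (d * m + μ + r).choose r) := by
      ring
    omega
  omega
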